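/- arXiv:2304.04927 — 3 statements merged into one kernel-verified Lean document; each statement's English description precedes it below -/
import Mathlib

section
/- Let A ∈ ℝ^{n×n} be Schur stable, B ∈ ℝ^{n×m}, B_d ∈ ℝ^{n×q}, C ∈ ℝ^{p×n}, D ∈ ℝ^{p×m}, and suppose the DC gain G₁ = C (I_n − A)⁻¹ B_d ∈ ℝ^{p×q} has full column rank q. Set L = (G₁ᵀ G₁)⁻¹ G₁ᵀ. Consider the plant x(t+1) = A x(t) + B u(t) + B_d d, y(t) = C x(t) + D u(t) with constant unknown disturbance d ∈ ℝ^q, together with the disturbance estimator x̂(t+1) = A x̂(t) + B u(t) + B_d d̂(t), ŷ(t) = C x̂(t) + D u(t), d̂(t+1) = d̂(t) − ε L (ŷ(t) − y(t)). Then there exists ε* > 0 such that for every ε ∈ (0, ε*), for every input sequence u and all initial conditions x(0), x̂(0), d̂(0), there exist constants c ≥ 0 and ρ ∈ (0,1) with ‖d̂(t) − d‖ ≤ c ρ^t for all t ≥ 0; i.e., d̂(t) → d exponentially. -/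
open Matrix

open Filter

section helpers

noncomputable def eN {k : ℕ} (v : Fin k → ℝ) : ℝ := ‖(WithLp.equiv 2 (Fin k → ℝ)).symm v‖

lemma eN_nonneg {k : ℕ} (v : Fin k → ℝ) : 0 ≤ eN v := norm_nonneg _

lemma eN_add_le {k : ℕ} (v w : Fin k → ℝ) : eN (v + w) ≤ eN v + eN w := by
  unfold eN; rw [WithLp.equiv_symm_apply, WithLp.toLp_add]; exact norm_add_le _ _

lemma eN_sub_le {k : ℕ} (v w : Fin k → ℝ) : eN (v - w) ≤ eN v + eN w := by
  unfold eN; rw [WithLp.equiv_symm_apply, WithLp.toLp_sub]; exact norm_sub_le _ _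

lemma eN_smul {k : ℕ} (c : ℝ) (v : Fin k → ℝ) : eN (c • v) = |c| * eN v := by
  unfold eN; rw [WithLp.equiv_symm_apply, WithLp.toLp_smul, norm_smul, Real.norm_eq_abs]

noncomputable def nuF {n : ℕ} (A : Matrix (Fin n) (Fin n) ℝ) (a : ℝ) (T : ℕ)
    (v : Fin n → ℝ) : ℝ :=
  ∑ k ∈ Finset.range T, (1/a)^k * eN ((A^k).mulVec v)

lemma nuF_nonneg {n : ℕ} (A : Matrix (Fin n) (Fin n) ℝ) {a : ℝ} (ha : 0 < a) (T : ℕ)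
    (v : Fin n → ℝ) : 0 ≤ nuF A a T v :=
  Finset.sum_nonneg fun k _ => mul_nonneg (pow_nonneg (by positivity) _) (eN_nonneg _)

lemma eN_le_nuF {n : ℕ} (A : Matrix (Fin n) (Fin n) ℝ) {a : ℝ} (ha : 0 < a) {T : ℕ}
    (hT : 0 < T) (v : Fin n → ℝ) : eN v ≤ nuF A a T v := by
  have h0 : (0 : ℕ) ∈ Finset.range T := Finset.mem_range.mpr hT
  calc eN v = (1/a)^0 * eN ((A^0).mulVec v) := by
        rw [pow_zero, pow_zero, Matrix.one_mulVec, one_mul]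
    _ ≤ nuF A a T v := Finset.single_le_sum
        (f := fun k => (1/a)^k * eN ((A^k).mulVec v))
        (fun k _ => mul_nonneg (pow_nonneg (by positivity) _) (eN_nonneg _)) h0

lemma nuF_add_le {n : ℕ} (A : Matrix (Fin n) (Fin n) ℝ) {a : ℝ} (ha : 0 < a) (T : ℕ)
    (v w : Fin n → ℝ) : nuF A a T (v + w) ≤ nuF A a T v + nuF A a T w := by
  rw [nuF, nuF, nuF, ← Finset.sum_add_distrib]
  apply Finset.sum_le_sum
  intro k _
  rw [Matrix.mulVec_add, ← mul_add]
  exact mul_le_mul_of_nonneg_left (eN_add_le _ _) (pow_nonneg (by positivity) _)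

lemma nuF_smul {n : ℕ} (A : Matrix (Fin n) (Fin n) ℝ) (a : ℝ) (T : ℕ)
    (c : ℝ) (v : Fin n → ℝ) : nuF A a T (c • v) = |c| * nuF A a T v := by
  rw [nuF, nuF, Finset.mul_sum]
  apply Finset.sum_congr rfl
  intro k _
  rw [Matrix.mulVec_smul, eN_smul]
  ring

lemma nuF_mulVec {n : ℕ} (A : Matrix (Fin n) (Fin n) ℝ) {a : ℝ} (ha : 0 < a) {T : ℕ}
    (hT : 0 < T)
    (hAT : ∀ v, eN ((A^T).mulVec v) ≤ a^T * eN v)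
    (v : Fin n → ℝ) : nuF A a T (A.mulVec v) ≤ a * nuF A a T v := by
  set g : ℕ → ℝ := fun k => (1/a)^k * eN ((A^k).mulVec v) with hg
  have hstep : ∀ k, (1/a)^k * eN ((A^k).mulVec (A.mulVec v)) = a * g (k+1) := by
    intro k
    rw [hg]
    simp only []
    rw [Matrix.mulVec_mulVec, ← pow_succ]
    linear_combination (-(1/a)^k * eN ((A^(k+1)).mulVec v)) * mul_one_div_cancel ha.ne'
  have hsum : nuF A a T (A.mulVec v) = a * ∑ k ∈ Finset.range T, g (k+1) := by
    rw [nuF, Finset.mul_sum]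
    exact Finset.sum_congr rfl fun k _ => hstep k
  have hshift : ∑ k ∈ Finset.range T, g (k+1) = (∑ k ∈ Finset.range T, g k) + g T - g 0 := by
    have := Finset.sum_range_succ' g T
    rw [Finset.sum_range_succ] at this
    linarith
  have hgT : g T ≤ g 0 := by
    have h0 : g 0 = eN v := by
      show (1/a)^0 * eN ((A^0).mulVec v) = eN v
      rw [pow_zero, pow_zero, Matrix.one_mulVec, one_mul]
    rw [h0]
    show (1/a)^T * eN ((A^T).mulVec v) ≤ eN v
    calc (1/a)^T * eN ((A^T).mulVec v) ≤ (1/a)^T * (a^T * eN v) :=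
          mul_le_mul_of_nonneg_left (hAT v) (pow_nonneg (by positivity) _)
      _ = eN v := by rw [← mul_assoc, ← mul_pow, one_div_mul_cancel ha.ne', one_pow, one_mul]
  rw [hsum, hshift]
  have : (∑ k ∈ Finset.range T, g k) + g T - g 0 ≤ ∑ k ∈ Finset.range T, g k := by linarith
  calc a * ((∑ k ∈ Finset.range T, g k) + g T - g 0) ≤ a * ∑ k ∈ Finset.range T, g k :=
        mul_le_mul_of_nonneg_left this ha.le
    _ = a * nuF A a T v := rfl

lemma mulVec_norm_bound {r s : ℕ} (M : Matrix (Fin r) (Fin s) ℝ) :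
    ∃ k : ℝ, 0 ≤ k ∧ ∀ v : Fin s → ℝ, eN (M.mulVec v) ≤ k * eN v := by
  let T := LinearMap.toContinuousLinearMap (Matrix.toEuclideanLin (𝕜 := ℝ) M)
  refine ⟨‖T‖, norm_nonneg _, fun v => ?_⟩
  have := T.le_opNorm ((WithLp.equiv 2 (Fin s → ℝ)).symm v)
  simpa [T, eN, Matrix.toEuclideanLin_apply] using this

end helpers

lemma euclid_norm_ofReal {n : ℕ} (w : Fin n → ℝ) :
    ‖(WithLp.equiv 2 (Fin n → ℂ)).symm (fun i => (w i : ℂ))‖ =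
      ‖(WithLp.equiv 2 (Fin n → ℝ)).symm w‖ := by
  rw [EuclideanSpace.norm_eq, EuclideanSpace.norm_eq]
  congr 1
  apply Finset.sum_congr rfl
  intro i _
  simp [Complex.norm_real]

lemma schur_pow_bound {n : ℕ} (A : Matrix (Fin n) (Fin n) ℝ)
    (hA : ∀ μ ∈ spectrum ℂ (A.map Complex.ofReal), ‖μ‖ < 1) :
    ∃ a : ℝ, 0 < a ∧ a < 1 ∧ ∃ T : ℕ, 0 < T ∧
      ∀ v : Fin n → ℝ,
        ‖(WithLp.equiv 2 (Fin n → ℝ)).symm ((A ^ T).mulVec v)‖ ≤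
          a ^ T * ‖(WithLp.equiv 2 (Fin n → ℝ)).symm v‖ := by
  rcases Nat.eq_zero_or_pos n with hn | hn
  · subst hn
    refine ⟨1/2, by norm_num, by norm_num, 1, one_pos, fun v => ?_⟩
    have h1 : (WithLp.equiv 2 (Fin 0 → ℝ)).symm ((A ^ 1).mulVec v) = 0 := Subsingleton.elim _ _
    have h2 : (WithLp.equiv 2 (Fin 0 → ℝ)).symm v = 0 := Subsingleton.elim _ _
    rw [h1, h2]; simp
  haveI : Nonempty (Fin n) := ⟨⟨0, hn⟩⟩
  set Ac := A.map (Complex.ofReal) with hAc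
  set Tc : EuclideanSpace ℂ (Fin n) →L[ℂ] EuclideanSpace ℂ (Fin n) :=
    Matrix.toEuclideanCLM (𝕜 := ℂ) Ac with hTc
  have hspec : spectrum ℂ Tc = spectrum ℂ Ac :=
    AlgEquiv.spectrum_eq (Matrix.toEuclideanCLM (𝕜 := ℂ) (n := Fin n)) Ac
  haveI : Nontrivial (EuclideanSpace ℂ (Fin n) →L[ℂ] EuclideanSpace ℂ (Fin n)) := by
    refine ⟨0, 1, fun h => ?_⟩
    have := congrArg (fun f => f ((WithLp.equiv 2 (Fin n → ℂ)).symm (fun _ => 1))) h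
    simp at this
    exact one_ne_zero (congrFun (congrArg WithLp.ofLp this) (Classical.arbitrary (Fin n))).symm
  have hrad : spectralRadius ℂ Tc < (1 : NNReal) := by
    apply spectrum.spectralRadius_lt_of_forall_lt
    intro z hz
    rw [hspec] at hz
    have := hA z hz
    simpa [← NNReal.coe_lt_coe, coe_nnnorm] using this
  obtain ⟨a, ha1, ha2⟩ := ENNReal.lt_iff_exists_nnreal_btwn.mp hrad
  have ha2' : a < 1 := by exact_mod_cast ha2
  have ha0 : 0 < a := ENNReal.coe_pos.mp (lt_of_le_of_lt zero_le ha1)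
  have hG := spectrum.pow_nnnorm_pow_one_div_tendsto_nhds_spectralRadius Tc
  have hev : ∀ᶠ k : ℕ in atTop, (‖Tc ^ k‖₊ : ENNReal) ^ (1/(k:ℝ)) < (a : ENNReal) :=
    hG.eventually_lt_const ha1
  obtain ⟨T, hT1, hT2⟩ := (hev.and (eventually_ge_atTop 1)).exists
  have hTpos : (0:ℝ) < T := by exact_mod_cast hT2
  have h : ‖Tc ^ T‖₊ < a ^ T := by
    have h := ENNReal.rpow_lt_rpow hT1 hTpos
    rw [← ENNReal.rpow_mul, one_div, inv_mul_cancel₀ (ne_of_gt hTpos), ENNReal.rpow_one,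
      ENNReal.rpow_natCast] at h
    exact_mod_cast h
  refine ⟨a, ha0, ha2', T, hT2, fun v => ?_⟩
  have hpow : Tc ^ T = Matrix.toEuclideanCLM (𝕜 := ℂ) (Ac ^ T) := by
    rw [hTc]; exact (map_pow _ _ _).symm
  have hAcT : Ac ^ T = (A ^ T).map Complex.ofReal := by
    rw [hAc]
    show (Complex.ofRealHom.mapMatrix A) ^ T = Complex.ofRealHom.mapMatrix (A ^ T)
    rw [map_pow]
  have happ : (Matrix.toEuclideanCLM (𝕜 := ℂ) (Ac ^ T))
      ((WithLp.equiv 2 (Fin n → ℂ)).symm (fun i => (v i : ℂ)))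
      = (WithLp.equiv 2 (Fin n → ℂ)).symm (fun i => (((A ^ T).mulVec v i : ℝ) : ℂ)) := by
    rw [WithLp.equiv_symm_apply, Matrix.toEuclideanCLM_toLp]
    congr 1
    rw [hAcT]
    funext i
    exact (RingHom.map_mulVec Complex.ofRealHom (A ^ T) v i).symm
  have hb := (Tc ^ T).le_opNorm ((WithLp.equiv 2 (Fin n → ℂ)).symm (fun i => (v i : ℂ)))
  rw [hpow, happ] at hb
  rw [euclid_norm_ofReal, euclid_norm_ofReal] at hb
  have hop : ‖Matrix.toEuclideanCLM (𝕜 := ℂ) (Ac ^ T)‖ ≤ (a:ℝ)^T := by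
    rw [← hpow, ← coe_nnnorm, ← NNReal.coe_pow]
    exact NNReal.coe_le_coe.mpr h.le
  exact hb.trans (mul_le_mul_of_nonneg_right hop (norm_nonneg _))



set_option maxHeartbeats 2000000 in
/-- **Data-Driven Disturbance Estimator (Theorem 1, state-space form).**
If `A` is Schur stable and the DC gain `G₁ = C (I - A)⁻¹ B_d` has full column
rank, then with the gain `L = (G₁ᵀG₁)⁻¹G₁ᵀ` there exists `ε* > 0` such that for
every `ε ∈ (0, ε*)`, for every input sequence, constant disturbance `d`, and
all initial conditions of plant and estimator, the disturbance estimate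
`dh(t)` converges to `d` exponentially. -/
theorem disturbance_estimator_convergence
    (n m q p : ℕ)
    (A : Matrix (Fin n) (Fin n) ℝ) (B : Matrix (Fin n) (Fin m) ℝ)
    (Bd : Matrix (Fin n) (Fin q) ℝ) (C : Matrix (Fin p) (Fin n) ℝ)
    (D : Matrix (Fin p) (Fin m) ℝ)
    (hA : ∀ μ ∈ spectrum ℂ (A.map Complex.ofReal), ‖μ‖ < 1)
    (G₁ : Matrix (Fin p) (Fin q) ℝ) (hG₁ : G₁ = C * (1 - A)⁻¹ * Bd)
    (hrank : G₁.rank = q)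
    (L : Matrix (Fin q) (Fin p) ℝ) (hL : L = (G₁ᵀ * G₁)⁻¹ * G₁ᵀ) :
    ∃ εstar > (0 : ℝ), ∀ ε ∈ Set.Ioo (0 : ℝ) εstar,
      ∀ (u : ℕ → Fin m → ℝ) (d : Fin q → ℝ)
        (x xh : ℕ → Fin n → ℝ) (dh : ℕ → Fin q → ℝ)
        (y yh : ℕ → Fin p → ℝ),
        (∀ t, x (t + 1) = A.mulVec (x t) + B.mulVec (u t) + Bd.mulVec d) →
        (∀ t, y t = C.mulVec (x t) + D.mulVec (u t)) →
        (∀ t, xh (t + 1) = A.mulVec (xh t) + B.mulVec (u t) + Bd.mulVec (dh t)) →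
        (∀ t, yh t = C.mulVec (xh t) + D.mulVec (u t)) →
        (∀ t, dh (t + 1) = dh t - ε • L.mulVec (yh t - y t)) →
        ∃ c ≥ (0 : ℝ), ∃ ρ ∈ Set.Ioo (0 : ℝ) 1,
          ∀ t : ℕ,
            ‖(WithLp.equiv 2 (Fin q → ℝ)).symm (dh t - d)‖ ≤ c * ρ ^ t := by

  classical
  obtain ⟨a, ha0, ha1, T, hT, hAT'⟩ := schur_pow_bound A hA
  have hAT : ∀ v, eN ((A^T).mulVec v) ≤ a^T * eN v := hAT'
  set F : Matrix (Fin n) (Fin q) ℝ := (1 - A)⁻¹ * Bd with hF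
  -- invertibility of 1 - A
  have hdet : IsUnit (1 - A).det := by
    by_contra hcon
    have hdz : (1 - A).det = 0 := by
      simpa [isUnit_iff_ne_zero] using hcon
    have h1 : (1 : ℂ) ∈ spectrum ℂ (A.map Complex.ofReal) := by
      rw [spectrum.mem_iff]
      intro hu
      rw [Matrix.isUnit_iff_isUnit_det] at hu
      have hmap : algebraMap ℂ (Matrix (Fin n) (Fin n) ℂ) 1 - A.map Complex.ofReal
          = (1 - A).map Complex.ofReal := by
        rw [_root_.map_one, Matrix.map_sub _ (fun a b => Complex.ofReal_sub a b),
          Matrix.map_one _ Complex.ofReal_zero Complex.ofReal_one]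
      rw [hmap] at hu
      have hu2 : IsUnit ((1 - A).map ⇑Complex.ofRealHom).det := hu
      have hdet2 := RingHom.map_det Complex.ofRealHom (1 - A)
      rw [RingHom.mapMatrix_apply] at hdet2
      rw [← hdet2, hdz] at hu2
      simp at hu2
    have := hA 1 h1
    simp at this
  have hinv : (1 - A) * (1 - A)⁻¹ = 1 := Matrix.mul_nonsing_inv _ hdet
  have hAF : A * F = F - Bd := by
    have h1 : (1 - A) * ((1 - A)⁻¹ * Bd) = Bd := by
      rw [← Matrix.mul_assoc, hinv, Matrix.one_mul]
    have h2 : (1 - A) * ((1 - A)⁻¹ * Bd) = (1 - A)⁻¹ * Bd - A * ((1 - A)⁻¹ * Bd) := by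
      rw [Matrix.sub_mul, Matrix.one_mul]
    rw [h2] at h1
    rw [hF]
    linear_combination (norm := abel) -h1
  have hLCF : (L * C) * F = 1 := by
    have hrk : (G₁ᵀ * G₁).rank = q := by rw [Matrix.rank_transpose_mul_self, hrank]
    have hunit : IsUnit (G₁ᵀ * G₁) := by
      rw [← Matrix.mulVec_surjective_iff_isUnit]
      have htop : LinearMap.range (G₁ᵀ * G₁).mulVecLin = ⊤ := by
        apply Submodule.eq_top_of_finrank_eq
        rw [← Matrix.rank, hrk]
        simp [Module.finrank_pi]
      intro v
      obtain ⟨w, hw⟩ := LinearMap.range_eq_top.mp htop v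
      exact ⟨w, by rw [← Matrix.mulVecLin_apply]; exact hw⟩
    have hGinv : (G₁ᵀ * G₁)⁻¹ * (G₁ᵀ * G₁) = 1 :=
      Matrix.nonsing_inv_mul _ ((Matrix.isUnit_iff_isUnit_det _).mp hunit)
    have hCF : C * F = G₁ := by rw [hF, hG₁, Matrix.mul_assoc]
    calc (L * C) * F = L * (C * F) := by rw [Matrix.mul_assoc]
      _ = L * G₁ := by rw [hCF]
      _ = (G₁ᵀ * G₁)⁻¹ * (G₁ᵀ * G₁) := by rw [hL, Matrix.mul_assoc]
      _ = 1 := hGinv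
  have hFLCF : F * ((L * C) * F) = F := by
    rw [hLCF, Matrix.mul_one]
  -- norm bounds
  choose κ hκ0 hκ using fun k : ℕ => mulVec_norm_bound (A ^ k)
  obtain ⟨kFLC, hkFLC0, hkFLC⟩ := mulVec_norm_bound (F * (L * C))
  obtain ⟨kF, hkF0, hkF⟩ := mulVec_norm_bound F
  obtain ⟨kLC, hkLC0, hkLC⟩ := mulVec_norm_bound (L * C)
  set K : ℝ := ∑ k ∈ Finset.range T, (1/a)^k * κ k with hK
  have hK0 : 0 ≤ K :=
    Finset.sum_nonneg fun k _ => mul_nonneg (pow_nonneg (by positivity) _) (hκ0 k)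
  have hnu_le : ∀ v, nuF A a T v ≤ K * eN v := by
    intro v
    rw [nuF, hK, Finset.sum_mul]
    apply Finset.sum_le_sum
    intro k _
    rw [mul_assoc]
    exact mul_le_mul_of_nonneg_left (hκ k v) (pow_nonneg (by positivity) _)
  set θ : ℝ := 2 * K * kF + 1 with hθdef
  have hθ : 0 < θ := by nlinarith
  set C₁ : ℝ := K * kFLC + θ * kLC with hC₁def
  have hC₁ : 0 ≤ C₁ := by nlinarith
  refine ⟨min ((1 - a)/(C₁ + 1)) 1, lt_min (div_pos (by linarith) (by positivity)) one_pos, ?_⟩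
  rintro ε ⟨hε0, hεlt⟩ u d x xh dh y yh hx hy hxh hyh hdh
  have hε1 : ε < 1 := lt_of_lt_of_le hεlt (min_le_right _ _)
  have hεs : ε < (1 - a)/(C₁ + 1) := lt_of_lt_of_le hεlt (min_le_left _ _)
  have hεC : ε * (C₁ + 1) < 1 - a := by
    rw [← lt_div_iff₀ (by positivity)]
    exact hεs
  -- error coordinates
  set δ : ℕ → Fin q → ℝ := fun t => dh t - d with hδdef
  set e : ℕ → Fin n → ℝ := fun t => xh t - x t with hedef
  set w : ℕ → Fin n → ℝ := fun t => e t - F.mulVec (δ t) with hwdef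
  have h_e : ∀ t, e (t+1) = A.mulVec (e t) + Bd.mulVec (δ t) := by
    intro t
    simp only [hedef, hδdef]
    rw [hxh, hx, Matrix.mulVec_sub, Matrix.mulVec_sub]
    abel
  have h_δ : ∀ t, δ (t+1) = δ t - ε • (L * C).mulVec (e t) := by
    intro t
    simp only [hedef, hδdef]
    rw [hdh]
    have hyd : yh t - y t = C.mulVec (xh t - x t) := by
      rw [hyh, hy, Matrix.mulVec_sub]; abel
    rw [hyd, Matrix.mulVec_mulVec]
    abel
  have hew : ∀ t, e t = w t + F.mulVec (δ t) := by
    intro t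
    simp only [hwdef]
    abel
  have h_w : ∀ t, w (t+1) = A.mulVec (w t)
      + ε • ((F * (L * C)).mulVec (w t) + F.mulVec (δ t)) := by
    intro t
    simp only [hwdef]
    rw [h_e t, h_δ t, hew t]
    simp only [Matrix.mulVec_add, Matrix.mulVec_sub, Matrix.mulVec_smul,
      Matrix.mulVec_mulVec, smul_add, smul_sub]
    rw [hAF, hFLCF, Matrix.sub_mulVec]
    abel
  have h_δw : ∀ t, δ (t+1) = (1 - ε) • δ t - ε • (L * C).mulVec (w t) := by
    intro t
    rw [h_δ t, hew t]
    simp only [Matrix.mulVec_add, Matrix.mulVec_mulVec, smul_add]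
    rw [hLCF, Matrix.one_mulVec, sub_smul, one_smul]
    abel
  -- Lyapunov-type estimate
  set ρ : ℝ := max (a + ε * C₁) (1 - ε/2) with hρdef
  have hρpos : 0 < ρ := lt_of_lt_of_le (by nlinarith) (le_max_left _ _)
  have hρlt1 : ρ < 1 := by
    apply max_lt
    · nlinarith
    · linarith
  have hstep : ∀ t, nuF A a T (w (t+1)) + θ * eN (δ (t+1))
      ≤ ρ * (nuF A a T (w t) + θ * eN (δ t)) := by
    intro t
    have hP : 0 ≤ nuF A a T (w t) := nuF_nonneg A ha0 T _
    have hQ : 0 ≤ eN (δ t) := eN_nonneg _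
    -- bound on nuF (w (t+1))
    have h1 : nuF A a T (w (t+1)) ≤ (a + ε * (K * kFLC)) * nuF A a T (w t)
        + ε * (K * kF) * eN (δ t) := by
      rw [h_w t]
      have s1 : nuF A a T (A.mulVec (w t)
          + ε • ((F * (L * C)).mulVec (w t) + F.mulVec (δ t)))
          ≤ nuF A a T (A.mulVec (w t))
            + nuF A a T (ε • ((F * (L * C)).mulVec (w t) + F.mulVec (δ t))) :=
        nuF_add_le A ha0 T _ _
      have s2 : nuF A a T (A.mulVec (w t)) ≤ a * nuF A a T (w t) :=
        nuF_mulVec A ha0 hT hAT _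
      have s3 : nuF A a T (ε • ((F * (L * C)).mulVec (w t) + F.mulVec (δ t)))
          = ε * nuF A a T ((F * (L * C)).mulVec (w t) + F.mulVec (δ t)) := by
        rw [nuF_smul, abs_of_pos hε0]
      have s4 : nuF A a T ((F * (L * C)).mulVec (w t) + F.mulVec (δ t))
          ≤ K * eN ((F * (L * C)).mulVec (w t) + F.mulVec (δ t)) := hnu_le _
      have s5 : eN ((F * (L * C)).mulVec (w t) + F.mulVec (δ t))
          ≤ kFLC * eN (w t) + kF * eN (δ t) :=
        (eN_add_le _ _).trans (add_le_add (hkFLC _) (hkF _))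
      have s6 : eN (w t) ≤ nuF A a T (w t) := eN_le_nuF A ha0 hT _
      have c1 : eN ((F * (L * C)).mulVec (w t) + F.mulVec (δ t))
          ≤ kFLC * nuF A a T (w t) + kF * eN (δ t) :=
        s5.trans (add_le_add (mul_le_mul_of_nonneg_left s6 hkFLC0) le_rfl)
      have c2 : nuF A a T ((F * (L * C)).mulVec (w t) + F.mulVec (δ t))
          ≤ K * (kFLC * nuF A a T (w t) + kF * eN (δ t)) :=
        s4.trans (mul_le_mul_of_nonneg_left c1 hK0)
      have c3 := mul_le_mul_of_nonneg_left c2 hε0.le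
      rw [s3] at s1
      linarith [s1, s2, c3]
    -- bound on eN (δ (t+1))
    have h2 : eN (δ (t+1)) ≤ (1 - ε) * eN (δ t) + ε * kLC * nuF A a T (w t) := by
      rw [h_δw t]
      have s1 : eN ((1 - ε) • δ t - ε • (L * C).mulVec (w t))
          ≤ eN ((1 - ε) • δ t) + eN (ε • (L * C).mulVec (w t)) := eN_sub_le _ _
      rw [eN_smul, eN_smul, abs_of_pos hε0, abs_of_pos (by linarith : (0:ℝ) < 1 - ε)] at s1
      have s2 : eN ((L * C).mulVec (w t)) ≤ kLC * eN (w t) := hkLC _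
      have s3 : eN (w t) ≤ nuF A a T (w t) := eN_le_nuF A ha0 hT _
      nlinarith [mul_le_mul_of_nonneg_left (s2.trans (mul_le_mul_of_nonneg_left s3 hkLC0)) hε0.le]
    -- assemble
    have hρ1 : a + ε * C₁ ≤ ρ := le_max_left _ _
    rw [hC₁def] at hρ1
    have hρ2 : 1 - ε/2 ≤ ρ := le_max_right _ _
    have hkey1 : (a + ε * (K * kFLC + θ * kLC)) * nuF A a T (w t) ≤ ρ * nuF A a T (w t) :=
      mul_le_mul_of_nonneg_right hρ1 hP
    have hkey2 : (1 - ε/2) * (θ * eN (δ t)) ≤ ρ * (θ * eN (δ t)) :=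
      mul_le_mul_of_nonneg_right hρ2 (mul_nonneg hθ.le hQ)
    have hkey3 : ε * (K * kF) * eN (δ t) ≤ ε * (θ/2) * eN (δ t) := by
      apply mul_le_mul_of_nonneg_right _ hQ
      apply mul_le_mul_of_nonneg_left _ hε0.le
      rw [hθdef]; nlinarith
    have h2θ := mul_le_mul_of_nonneg_left h2 hθ.le
    clear_value θ K C₁ ρ
    linarith [h1, h2θ, hkey1, hkey2, hkey3]
  set V0 : ℝ := nuF A a T (w 0) + θ * eN (δ 0) with hV0def
  have hV0nn : 0 ≤ V0 :=
    add_nonneg (nuF_nonneg A ha0 T _) (mul_nonneg hθ.le (eN_nonneg _))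
  have hVt : ∀ t, nuF A a T (w t) + θ * eN (δ t) ≤ ρ ^ t * V0 := by
    intro t
    induction t with
    | zero => simp [hV0def]
    | succ t ih =>
      calc nuF A a T (w (t+1)) + θ * eN (δ (t+1))
          ≤ ρ * (nuF A a T (w t) + θ * eN (δ t)) := hstep t
        _ ≤ ρ * (ρ ^ t * V0) := mul_le_mul_of_nonneg_left ih hρpos.le
        _ = ρ ^ (t+1) * V0 := by ring
  refine ⟨V0 / θ, div_nonneg hV0nn hθ.le, ρ, ⟨hρpos, hρlt1⟩, fun t => ?_⟩
  show eN (dh t - d) ≤ V0 / θ * ρ ^ t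
  have hδt : δ t = dh t - d := by rw [hδdef]
  rw [← hδt]
  have h1 : θ * eN (δ t) ≤ ρ ^ t * V0 := by
    have h2 := hVt t
    have h3 := nuF_nonneg A ha0 T (w t)
    linarith
  rw [div_mul_eq_mul_div, mul_comm V0 (ρ ^ t), le_div_iff₀ hθ]
  linarith
end

section
/- Let A ∈ ℝ^{n×n} be Schur stable, B_d ∈ ℝ^{n×q}, C ∈ ℝ^{p×n}, and suppose the DC gain G₁ = C (I_n − A)⁻¹ B_d ∈ ℝ^{p×q} has full column rank q. Set L = (G₁ᵀ G₁)⁻¹ G₁ᵀ ∈ ℝ^{q×p}. Then there exists ε* > 0 such that for all ε ∈ (0, ε*), the block matrix [[A, B_d], [−ε L C, I_q]] ∈ ℝ^{(n+q)×(n+q)} is Schur stable. -/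
set_option maxHeartbeats 1000000


open Matrix

/-- Entrywise sum of norms of a complex matrix; an upper bound for the
`mulVec` operator norm w.r.t. the sup norm on vectors. -/
noncomputable def NBc {m k : Type*} [Fintype m] [Fintype k] (M : Matrix m k ℂ) : ℝ :=
  ∑ i, ∑ j, ‖M i j‖

lemma NBc_nonneg {m k : Type*} [Fintype m] [Fintype k] (M : Matrix m k ℂ) : 0 ≤ NBc M :=
  Finset.sum_nonneg fun _ _ => Finset.sum_nonneg fun _ _ => norm_nonneg _

lemma norm_mulVec_le {m k : Type*} [Fintype m] [Fintype k] (M : Matrix m k ℂ) (v : k → ℂ) :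
    ‖M.mulVec v‖ ≤ NBc M * ‖v‖ := by
  rw [pi_norm_le_iff_of_nonneg (mul_nonneg (NBc_nonneg M) (norm_nonneg v))]
  intro i
  calc ‖M.mulVec v i‖ = ‖∑ j, M i j * v j‖ := by rfl
    _ ≤ ∑ j, ‖M i j * v j‖ := norm_sum_le _ _
    _ ≤ ∑ j, ‖M i j‖ * ‖v‖ := by
        refine Finset.sum_le_sum fun j _ => ?_
        rw [norm_mul]
        exact mul_le_mul_of_nonneg_left (norm_le_pi_norm v j) (norm_nonneg _)
    _ = (∑ j, ‖M i j‖) * ‖v‖ := by rw [Finset.sum_mul]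
    _ ≤ NBc M * ‖v‖ := by
        refine mul_le_mul_of_nonneg_right ?_ (norm_nonneg v)
        exact Finset.single_le_sum (f := fun i => ∑ j, ‖M i j‖)
          (fun i _ => Finset.sum_nonneg fun _ _ => norm_nonneg _) (Finset.mem_univ i)

/-- Uniform bound for the resolvent of a Schur stable matrix on a compact
annulus `1 ≤ ‖μ‖ ≤ Rb`. -/
lemma resolvent_bound {n : ℕ} (A' : Matrix (Fin n) (Fin n) ℂ)
    (hA : ∀ μ ∈ spectrum ℂ A', ‖μ‖ < 1) (Rb : ℝ) :
    ∃ K : ℝ, 0 ≤ K ∧ ∀ μ : ℂ, 1 ≤ ‖μ‖ → ‖μ‖ ≤ Rb →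
      NBc ((μ • (1 : Matrix (Fin n) (Fin n) ℂ) - A')⁻¹) ≤ K := by
  set S : Set ℂ := {μ | 1 ≤ ‖μ‖} ∩ Metric.closedBall 0 Rb with hS
  have hScompact : IsCompact S := by
    apply (isCompact_closedBall (0:ℂ) Rb).inter_left
    exact isClosed_le continuous_const continuous_norm
  have hunit : ∀ μ ∈ S, IsUnit (μ • (1 : Matrix (Fin n) (Fin n) ℂ) - A') := by
    intro μ hμ
    rw [← Algebra.algebraMap_eq_smul_one, ← spectrum.notMem_iff]
    intro hmem
    exact absurd (hA μ hmem) (not_lt.2 hμ.1)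
  have hdet : ∀ μ ∈ S, (μ • (1 : Matrix (Fin n) (Fin n) ℂ) - A').det ≠ 0 := fun μ hμ =>
    ((Matrix.isUnit_iff_isUnit_det _).mp (hunit μ hμ)).ne_zero
  have hcont1 : Continuous (fun μ : ℂ => μ • (1 : Matrix (Fin n) (Fin n) ℂ) - A') :=
    (continuous_id.smul continuous_const).sub continuous_const
  have hcontinv : ContinuousOn (fun μ : ℂ => (μ • (1 : Matrix (Fin n) (Fin n) ℂ) - A')⁻¹) S := by
    intro μ hμ
    apply ContinuousAt.continuousWithinAt
    apply ContinuousAt.comp _ hcont1.continuousAt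
    apply continuousAt_matrix_inv
    rw [Ring.inverse_eq_inv']
    exact continuousAt_inv₀ (hdet μ hμ)
  have hcontNB : ContinuousOn
      (fun μ : ℂ => NBc ((μ • (1 : Matrix (Fin n) (Fin n) ℂ) - A')⁻¹)) S := by
    unfold NBc
    refine continuousOn_finset_sum _ fun i _ => continuousOn_finset_sum _ fun j _ => ?_
    exact (((continuous_apply j).comp (continuous_apply i)).comp_continuousOn hcontinv).norm
  obtain ⟨C, hC⟩ := hScompact.exists_bound_of_continuousOn hcontNB
  refine ⟨max C 0, le_max_right _ _, fun μ h1 h2 => ?_⟩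
  have hμS : μ ∈ S := ⟨h1, by simpa [Metric.mem_closedBall] using h2⟩
  calc NBc _ ≤ ‖NBc ((μ • (1 : Matrix (Fin n) (Fin n) ℂ) - A')⁻¹)‖ := le_abs_self _
    _ ≤ C := hC μ hμS
    _ ≤ max C 0 := le_max_left _ _

lemma isUnit_of_rank_eq_card {q : ℕ} (M : Matrix (Fin q) (Fin q) ℝ) (h : M.rank = q) :
    IsUnit M := by
  rw [← Matrix.mulVec_surjective_iff_isUnit]
  have htop : LinearMap.range M.mulVecLin = ⊤ := by
    apply Submodule.eq_top_of_finrank_eq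
    rw [← Matrix.rank, h]
    simp [Module.finrank_pi]
  exact LinearMap.range_eq_top.mp htop

/-- If `A` is Schur stable and the DC gain `G₁ = C (I - A)⁻¹ B_d` has full
column rank, then with `L = (G₁ᵀG₁)⁻¹G₁ᵀ` there exists `ε* > 0` such that for
all `ε ∈ (0, ε*)` the block matrix `[[A, B_d], [−εLC, I_q]]` is Schur stable. -/
theorem block_error_matrix_schur_stable
    (n q p : ℕ)
    (A : Matrix (Fin n) (Fin n) ℝ)
    (Bd : Matrix (Fin n) (Fin q) ℝ) (C : Matrix (Fin p) (Fin n) ℝ)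
    (hA : ∀ μ ∈ spectrum ℂ (A.map Complex.ofReal), ‖μ‖ < 1)
    (G₁ : Matrix (Fin p) (Fin q) ℝ) (hG₁ : G₁ = C * (1 - A)⁻¹ * Bd)
    (hrank : G₁.rank = q)
    (L : Matrix (Fin q) (Fin p) ℝ) (hL : L = (G₁ᵀ * G₁)⁻¹ * G₁ᵀ) :
    ∃ εstar > (0 : ℝ), ∀ ε ∈ Set.Ioo (0 : ℝ) εstar,
      ∀ μ ∈ spectrum ℂ
        ((Matrix.fromBlocks A Bd (-(ε • (L * C))) (1 : Matrix (Fin q) (Fin q) ℝ)).map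
          Complex.ofReal),
        ‖μ‖ < 1 := by
  classical
  set θ : ℝ →+* ℂ := Complex.ofRealHom with hθ
  set A' : Matrix (Fin n) (Fin n) ℂ := A.map Complex.ofReal with hA'
  set B' : Matrix (Fin n) (Fin q) ℂ := Bd.map Complex.ofReal with hB'
  set LC' : Matrix (Fin q) (Fin n) ℂ := (L * C).map Complex.ofReal with hLC'
  -- `L * G₁ = 1`
  have hG₁G₁rank : (G₁ᵀ * G₁).rank = q := by rw [Matrix.rank_transpose_mul_self, hrank]
  have hG₁G₁unit := isUnit_of_rank_eq_card _ hG₁G₁rank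
  have hLG : L * G₁ = 1 := by
    rw [hL, Matrix.mul_assoc]
    exact Matrix.nonsing_inv_mul _ ((Matrix.isUnit_iff_isUnit_det _).mp hG₁G₁unit)
  -- `1 - A` is invertible
  have hmap1A : (1 - A).map Complex.ofReal = 1 - A' := by
    ext i j
    by_cases h : i = j <;>
      simp [hA', Matrix.map_apply, Matrix.sub_apply, Matrix.one_apply, h]
  have h1unit : IsUnit ((1 : Matrix (Fin n) (Fin n) ℂ) - A') := by
    have h1spec : (1 : ℂ) ∉ spectrum ℂ A' := fun h => by simpa using hA 1 h
    have := spectrum.notMem_iff.mp h1spec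
    rwa [Algebra.algebraMap_eq_smul_one, one_smul] at this
  have h1detC : ((1 : Matrix (Fin n) (Fin n) ℂ) - A').det ≠ 0 :=
    ((Matrix.isUnit_iff_isUnit_det _).mp h1unit).ne_zero
  have hdet1 : IsUnit (1 - A).det := by
    rw [isUnit_iff_ne_zero]
    intro h0
    apply h1detC
    rw [← hmap1A]
    have : ((1 - A).map θ).det = θ (1 - A).det := (θ.map_det (1 - A)).symm
    rw [show ((1 - A).map Complex.ofReal) = (1 - A).map θ from rfl, this, h0, map_zero]
  set R1 : Matrix (Fin n) (Fin n) ℂ := ((1 : Matrix (Fin n) (Fin n) ℂ) - A')⁻¹ with hR1def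
  have hR1mul : ((1 : Matrix (Fin n) (Fin n) ℂ) - A') * R1 = 1 :=
    Matrix.mul_nonsing_inv _ ((Matrix.isUnit_iff_isUnit_det _).mp h1unit)
  have hR1map : R1 = ((1 - A)⁻¹).map Complex.ofReal := by
    apply Matrix.inv_eq_right_inv
    rw [← hmap1A]
    rw [show ((1 - A).map Complex.ofReal) = (1 - A).map θ from rfl,
      show (((1 - A)⁻¹).map Complex.ofReal) = ((1 - A)⁻¹).map θ from rfl,
      ← Matrix.map_mul, Matrix.mul_nonsing_inv _ hdet1]
    exact Matrix.map_one _ (map_zero θ) (map_one θ)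
  have hkey : LC' * R1 * B' = (1 : Matrix (Fin q) (Fin q) ℂ) := by
    rw [hLC', hB', hR1map,
      show ((L * C).map Complex.ofReal) = (L * C).map θ from rfl,
      show (((1 - A)⁻¹).map Complex.ofReal) = ((1 - A)⁻¹).map θ from rfl,
      show (Bd.map Complex.ofReal) = Bd.map θ from rfl,
      ← Matrix.map_mul, ← Matrix.map_mul]
    have : L * C * (1 - A)⁻¹ * Bd = L * G₁ := by
      rw [hG₁, Matrix.mul_assoc, Matrix.mul_assoc, Matrix.mul_assoc]
    rw [this, hLG]
    exact Matrix.map_one _ (map_zero θ) (map_one θ)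
  -- constants
  set Rb : ℝ := NBc A' + NBc B' + NBc LC' + 1 with hRb
  obtain ⟨KR, hKR0, hKR⟩ := resolvent_bound A' hA Rb
  set P : ℝ := NBc LC' * (KR * (NBc R1 * NBc B')) with hP
  set K : ℝ := max P 1 with hK
  have hK1 : (1 : ℝ) ≤ K := le_max_right _ _
  have hK0 : (0 : ℝ) < K := lt_of_lt_of_le one_pos hK1
  refine ⟨min 1 (1 / (2 * K)), lt_min one_pos (by positivity), ?_⟩
  rintro ε ⟨hε0, hεlt⟩ μ hμ
  have hε1 : ε < 1 := lt_of_lt_of_le hεlt (min_le_left _ _)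
  have hεK : ε * K < 1 / 2 := by
    have h' : ε < 1 / (2 * K) := lt_of_lt_of_le hεlt (min_le_right _ _)
    rw [lt_div_iff₀ (by positivity)] at h'
    nlinarith
  by_contra hlt
  push_neg at hlt
  -- identify the complexified block matrix
  have hM' : (Matrix.fromBlocks A Bd (-(ε • (L * C))) (1 : Matrix (Fin q) (Fin q) ℝ)).map
      Complex.ofReal
      = Matrix.fromBlocks A' B' (-((ε : ℂ) • LC')) (1 : Matrix (Fin q) (Fin q) ℂ) := by
    have hmapneg : (-(ε • (L * C))).map Complex.ofReal = -((ε : ℂ) • LC') := by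
      ext i j
      simp [hLC', Matrix.map_apply]
    have hmapone : (1 : Matrix (Fin q) (Fin q) ℝ).map Complex.ofReal
        = (1 : Matrix (Fin q) (Fin q) ℂ) :=
      Matrix.map_one _ Complex.ofReal_zero Complex.ofReal_one
    rw [Matrix.fromBlocks_map, hmapneg, hmapone]
  rw [hM'] at hμ
  set M' := Matrix.fromBlocks A' B' (-((ε : ℂ) • LC')) (1 : Matrix (Fin q) (Fin q) ℂ) with hM'def
  have hnotunit : ¬IsUnit (μ • (1 : Matrix (Fin n ⊕ Fin q) (Fin n ⊕ Fin q) ℂ) - M') := by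
    have := spectrum.mem_iff.mp hμ
    rwa [Algebra.algebraMap_eq_smul_one] at this
  have hdet0 : (μ • (1 : Matrix (Fin n ⊕ Fin q) (Fin n ⊕ Fin q) ℂ) - M').det = 0 := by
    by_contra h
    exact hnotunit ((Matrix.isUnit_iff_isUnit_det _).mpr (isUnit_iff_ne_zero.mpr h))
  obtain ⟨v, hv0, hveq⟩ := (Matrix.exists_mulVec_eq_zero_iff).mpr hdet0
  have hv : M'.mulVec v = μ • v := by
    rw [Matrix.sub_mulVec, Matrix.smul_mulVec, Matrix.one_mulVec, sub_eq_zero] at hveq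
    exact hveq.symm
  set v₁ : Fin n → ℂ := v ∘ Sum.inl with hv₁def
  set v₂ : Fin q → ℂ := v ∘ Sum.inr with hv₂def
  have hve : v = Sum.elim v₁ v₂ := by funext x; cases x <;> rfl
  have hv' : (Matrix.fromBlocks A' B' (-((ε : ℂ) • LC'))
      (1 : Matrix (Fin q) (Fin q) ℂ)).mulVec (Sum.elim v₁ v₂) = μ • Sum.elim v₁ v₂ := by
    rw [← hve]; exact hv
  rw [Matrix.fromBlocks_mulVec] at hv'
  have eq1 : A'.mulVec v₁ + B'.mulVec v₂ = μ • v₁ := by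
    funext i
    have := congrFun hv' (Sum.inl i)
    simpa using this
  have eq2 : -((ε : ℂ) • LC'.mulVec v₁) + v₂ = μ • v₂ := by
    funext i
    have := congrFun hv' (Sum.inr i)
    simpa [Matrix.neg_mulVec, Matrix.smul_mulVec, Matrix.one_mulVec] using this
  have eq2' : (μ - 1) • v₂ = -((ε : ℂ) • LC'.mulVec v₁) := by
    rw [sub_smul, one_smul, ← eq2]
    abel
  -- case `v₂ = 0`
  by_cases hv₂0 : v₂ = 0
  · have hv₁0 : v₁ ≠ 0 := by
      intro h
      apply hv0
      rw [hve, h, hv₂0]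
      funext x; cases x <;> rfl
    have eqA : A'.mulVec v₁ = μ • v₁ := by
      rw [hv₂0, Matrix.mulVec_zero, add_zero] at eq1
      exact eq1
    have hmem : μ ∈ spectrum ℂ A' := by
      rw [spectrum.mem_iff, Algebra.algebraMap_eq_smul_one]
      intro hu
      have hdetA : (μ • (1 : Matrix (Fin n) (Fin n) ℂ) - A').det = 0 := by
        rw [← Matrix.exists_mulVec_eq_zero_iff]
        refine ⟨v₁, hv₁0, ?_⟩
        rw [Matrix.sub_mulVec, Matrix.smul_mulVec, Matrix.one_mulVec, eqA, sub_self]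
      exact ((Matrix.isUnit_iff_isUnit_det _).mp hu).ne_zero hdetA
    exact absurd (hA μ hmem) (not_lt.2 hlt)
  -- case `v₂ ≠ 0`
  have hv₂pos : 0 < ‖v₂‖ := norm_pos_iff.mpr hv₂0
  have hv₁le : ‖v₁‖ ≤ ‖v‖ := by
    rw [pi_norm_le_iff_of_nonneg (norm_nonneg v)]
    intro i; exact norm_le_pi_norm v _
  have hv₂le : ‖v₂‖ ≤ ‖v‖ := by
    rw [pi_norm_le_iff_of_nonneg (norm_nonneg v)]
    intro i; exact norm_le_pi_norm v _
  have hvpos : 0 < ‖v‖ := norm_pos_iff.mpr hv0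
  -- `‖μ‖ ≤ Rb`
  have hμRb : ‖μ‖ ≤ Rb := by
    have hRb0 : (0 : ℝ) ≤ Rb := by
      have h1 := NBc_nonneg A'
      have h2 := NBc_nonneg B'
      have h3 := NBc_nonneg LC'
      rw [hRb]; linarith
    have hbound : ‖μ • v‖ ≤ Rb * ‖v‖ := by
      rw [pi_norm_le_iff_of_nonneg (mul_nonneg hRb0 (norm_nonneg v))]
      intro x
      have hx : (μ • v) x = (μ • Sum.elim v₁ v₂) x := by rw [← hve]
      cases x with
      | inl i =>
        have h1 : (μ • v) (Sum.inl i) = (A'.mulVec v₁ + B'.mulVec v₂) i := by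
          rw [hx]; exact (congrFun eq1 i).symm
        rw [h1]
        calc ‖(A'.mulVec v₁ + B'.mulVec v₂) i‖ ≤ ‖A'.mulVec v₁ + B'.mulVec v₂‖ :=
              norm_le_pi_norm _ i
          _ ≤ ‖A'.mulVec v₁‖ + ‖B'.mulVec v₂‖ := norm_add_le _ _
          _ ≤ NBc A' * ‖v₁‖ + NBc B' * ‖v₂‖ := add_le_add (norm_mulVec_le _ _)
              (norm_mulVec_le _ _)
          _ ≤ Rb * ‖v‖ := by
              have h1 := NBc_nonneg A'
              have h2 := NBc_nonneg B'
              have h3 := NBc_nonneg LC'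
              have h4 := norm_nonneg v
              nlinarith [mul_le_mul_of_nonneg_left hv₁le h1,
                mul_le_mul_of_nonneg_left hv₂le h2]
      | inr i =>
        have h1 : (μ • v) (Sum.inr i) = (-((ε : ℂ) • LC'.mulVec v₁) + v₂) i := by
          rw [hx]; exact (congrFun eq2 i).symm
        rw [h1]
        calc ‖(-((ε : ℂ) • LC'.mulVec v₁) + v₂) i‖
            ≤ ‖-((ε : ℂ) • LC'.mulVec v₁) + v₂‖ := norm_le_pi_norm _ i
          _ ≤ ‖(ε : ℂ) • LC'.mulVec v₁‖ + ‖v₂‖ := by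
              simpa [norm_neg] using norm_add_le (-((ε : ℂ) • LC'.mulVec v₁)) v₂
          _ = ε * ‖LC'.mulVec v₁‖ + ‖v₂‖ := by
              rw [norm_smul, Complex.norm_real, Real.norm_eq_abs, abs_of_pos hε0]
          _ ≤ NBc LC' * ‖v₁‖ + ‖v₂‖ := by
              have := norm_mulVec_le LC' v₁
              nlinarith [norm_nonneg (LC'.mulVec v₁), NBc_nonneg LC', norm_nonneg v₁]
          _ ≤ Rb * ‖v‖ := by
              have h1 := NBc_nonneg A'
              have h2 := NBc_nonneg B'
              have h3 := NBc_nonneg LC'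
              nlinarith [mul_le_mul_of_nonneg_left hv₁le h3]
    rw [norm_smul] at hbound
    exact le_of_mul_le_mul_right hbound hvpos
  -- resolvent at μ
  have hunitμ : IsUnit (μ • (1 : Matrix (Fin n) (Fin n) ℂ) - A') := by
    rw [← Algebra.algebraMap_eq_smul_one, ← spectrum.notMem_iff]
    intro hmem
    exact absurd (hA μ hmem) (not_lt.2 hlt)
  have hdetμ : IsUnit (μ • (1 : Matrix (Fin n) (Fin n) ℂ) - A').det :=
    (Matrix.isUnit_iff_isUnit_det _).mp hunitμ
  set Rμ : Matrix (Fin n) (Fin n) ℂ := (μ • (1 : Matrix (Fin n) (Fin n) ℂ) - A')⁻¹ with hRμdef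
  have hNRμ : NBc Rμ ≤ KR := hKR μ hlt hμRb
  have e2 : Rμ * (μ • (1 : Matrix (Fin n) (Fin n) ℂ) - A') = 1 := Matrix.nonsing_inv_mul _ hdetμ
  -- `v₁` in terms of `v₂`
  have hv₁eq : v₁ = Rμ.mulVec (B'.mulVec v₂) := by
    have h1 : (μ • (1 : Matrix (Fin n) (Fin n) ℂ) - A').mulVec v₁ = B'.mulVec v₂ := by
      rw [Matrix.sub_mulVec, Matrix.smul_mulVec, Matrix.one_mulVec, ← eq1]
      abel
    calc v₁ = (1 : Matrix (Fin n) (Fin n) ℂ).mulVec v₁ := (Matrix.one_mulVec v₁).symm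
      _ = (Rμ * (μ • (1 : Matrix (Fin n) (Fin n) ℂ) - A')).mulVec v₁ := by rw [e2]
      _ = Rμ.mulVec ((μ • (1 : Matrix (Fin n) (Fin n) ℂ) - A').mulVec v₁) :=
          (Matrix.mulVec_mulVec _ _ _).symm
      _ = Rμ.mulVec (B'.mulVec v₂) := by rw [h1]
  -- resolvent identity
  have hres : Rμ = R1 + ((1 : ℂ) - μ) • (Rμ * R1) := by
    have hsplit : (1 : Matrix (Fin n) (Fin n) ℂ) - A'
        = (μ • (1 : Matrix (Fin n) (Fin n) ℂ) - A') + ((1 - μ) • 1) := by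
      rw [sub_smul, one_smul]
      abel
    calc Rμ = Rμ * (((1 : Matrix (Fin n) (Fin n) ℂ) - A') * R1) := by
          rw [hR1mul, Matrix.mul_one]
      _ = (Rμ * ((μ • (1 : Matrix (Fin n) (Fin n) ℂ) - A') + ((1 - μ) • 1))) * R1 := by
          rw [← hsplit, ← Matrix.mul_assoc]
      _ = (1 + (1 - μ) • Rμ) * R1 := by
          rw [Matrix.mul_add, e2, Matrix.mul_smul, Matrix.mul_one]
      _ = R1 + ((1 : ℂ) - μ) • (Rμ * R1) := by
          rw [Matrix.add_mul, Matrix.one_mul, Matrix.smul_mul]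
  -- the final vector identity
  set bb : Fin n → ℂ := B'.mulVec v₂ with hbbdef
  set W : Fin q → ℂ := LC'.mulVec (Rμ.mulVec (R1.mulVec bb)) with hWdef
  have hRμbb : Rμ.mulVec bb = R1.mulVec bb + ((1 : ℂ) - μ) • Rμ.mulVec (R1.mulVec bb) := by
    conv_lhs => rw [hres]
    rw [Matrix.add_mulVec, Matrix.smul_mulVec, ← Matrix.mulVec_mulVec]
  have hLCR1 : LC'.mulVec (R1.mulVec bb) = v₂ := by
    rw [hbbdef, Matrix.mulVec_mulVec, Matrix.mulVec_mulVec, hkey, Matrix.one_mulVec]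
  have hLCv₁ : LC'.mulVec v₁ = v₂ + ((1 : ℂ) - μ) • W := by
    rw [hv₁eq, hRμbb, Matrix.mulVec_add, Matrix.mulVec_smul, hLCR1, hWdef]
  have final : (μ - 1 + (ε : ℂ)) • v₂ = ((ε : ℂ) * (μ - 1)) • W := by
    have h := eq2'
    rw [hLCv₁] at h
    rw [add_smul, h]
    module
  -- norm estimates and contradiction
  set r : ℝ := ‖μ - 1‖ with hrdef
  have hr0 : (0 : ℝ) ≤ r := norm_nonneg _
  have hW : ‖W‖ ≤ K * ‖v₂‖ := by
    have c1 : ‖W‖ ≤ NBc LC' * (NBc Rμ * (NBc R1 * (NBc B' * ‖v₂‖))) := by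
      calc ‖W‖ ≤ NBc LC' * ‖Rμ.mulVec (R1.mulVec bb)‖ := norm_mulVec_le _ _
        _ ≤ NBc LC' * (NBc Rμ * ‖R1.mulVec bb‖) :=
            mul_le_mul_of_nonneg_left (norm_mulVec_le _ _) (NBc_nonneg _)
        _ ≤ NBc LC' * (NBc Rμ * (NBc R1 * ‖bb‖)) := by
            refine mul_le_mul_of_nonneg_left (mul_le_mul_of_nonneg_left ?_ (NBc_nonneg _))
              (NBc_nonneg _)
            exact norm_mulVec_le _ _
        _ ≤ NBc LC' * (NBc Rμ * (NBc R1 * (NBc B' * ‖v₂‖))) := by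
            refine mul_le_mul_of_nonneg_left (mul_le_mul_of_nonneg_left
              (mul_le_mul_of_nonneg_left ?_ (NBc_nonneg _)) (NBc_nonneg _)) (NBc_nonneg _)
            exact norm_mulVec_le _ _
    have c2 : NBc LC' * (NBc Rμ * (NBc R1 * (NBc B' * ‖v₂‖))) ≤ P * ‖v₂‖ := by
      have : NBc LC' * (KR * (NBc R1 * (NBc B' * ‖v₂‖))) = P * ‖v₂‖ := by rw [hP]; ring
      rw [← this]
      exact mul_le_mul_of_nonneg_left (mul_le_mul_of_nonneg_right hNRμ
        (mul_nonneg (NBc_nonneg _) (mul_nonneg (NBc_nonneg _) (norm_nonneg _)))) (NBc_nonneg _)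
    have c3 : P * ‖v₂‖ ≤ K * ‖v₂‖ :=
      mul_le_mul_of_nonneg_right (le_max_left _ _) (norm_nonneg _)
    linarith
  have hεnorm : ‖(ε : ℂ)‖ = ε := by
    rw [Complex.norm_real, Real.norm_eq_abs, abs_of_pos hε0]
  have hlow : ε ≤ ‖μ - 1 + (ε : ℂ)‖ := by
    have hform : μ - 1 + (ε : ℂ) = μ - ((1 : ℂ) - (ε : ℂ)) := by ring
    have h1ε : ‖(1 : ℂ) - (ε : ℂ)‖ = 1 - ε := by
      rw [show (1 : ℂ) - (ε : ℂ) = ((1 - ε : ℝ) : ℂ) by push_cast; ring,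
        Complex.norm_real, Real.norm_eq_abs, abs_of_nonneg (by linarith)]
    have := norm_sub_norm_le μ ((1 : ℂ) - (ε : ℂ))
    rw [h1ε] at this
    rw [hform]
    linarith
  have hmain : ‖μ - 1 + (ε : ℂ)‖ * ‖v₂‖ ≤ ε * r * (K * ‖v₂‖) := by
    have h1 : ‖(μ - 1 + (ε : ℂ)) • v₂‖ = ‖μ - 1 + (ε : ℂ)‖ * ‖v₂‖ := norm_smul _ _
    have h2 : ‖((ε : ℂ) * (μ - 1)) • W‖ = ε * r * ‖W‖ := by
      rw [norm_smul, norm_mul, hεnorm, hrdef]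
    calc ‖μ - 1 + (ε : ℂ)‖ * ‖v₂‖ = ‖((ε : ℂ) * (μ - 1)) • W‖ := by rw [← h1, final]
      _ = ε * r * ‖W‖ := h2
      _ ≤ ε * r * (K * ‖v₂‖) := mul_le_mul_of_nonneg_left hW (by positivity)
  have hcancel : ‖μ - 1 + (ε : ℂ)‖ ≤ ε * r * K := by
    have := le_of_mul_le_mul_right (by linarith [hmain] : ‖μ - 1 + (ε : ℂ)‖ * ‖v₂‖
      ≤ ε * r * K * ‖v₂‖) hv₂pos
    exact this
  have h1K : 1 ≤ r * K := by
    have : ε ≤ ε * r * K := le_trans hlow hcancel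
    have h' : ε * 1 ≤ ε * (r * K) := by nlinarith
    exact le_of_mul_le_mul_left h' hε0
  have hupper : r ≤ ε * r * K + ε := by
    have hform : μ - 1 = (μ - 1 + (ε : ℂ)) - (ε : ℂ) := by ring
    have h1 : r = ‖(μ - 1 + (ε : ℂ)) - (ε : ℂ)‖ := congrArg Norm.norm hform
    have h2 : ‖(μ - 1 + (ε : ℂ)) - (ε : ℂ)‖ ≤ ‖μ - 1 + (ε : ℂ)‖ + ‖(ε : ℂ)‖ :=
      norm_sub_le _ _
    rw [hεnorm] at h2
    have h3 : r ≤ ‖μ - 1 + (ε : ℂ)‖ + ε := by rw [h1]; exact h2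
    linarith
  -- contradiction
  have hr2ε : r ≤ 2 * ε := by
    have h1 : ε * r * K = r * (ε * K) := by ring
    have h2 : r * (ε * K) ≤ r * (1 / 2) := mul_le_mul_of_nonneg_left hεK.le hr0
    rw [h1] at hupper
    linarith
  have hfinal : r * K ≤ 2 * ε * K := mul_le_mul_of_nonneg_right hr2ε (le_of_lt hK0)
  have : 2 * ε * K = 2 * (ε * K) := by ring
  linarith
end

section
/- Let A ∈ ℝ^{n×n} and let P ∈ ℝ^{n×n} be symmetric positive definite with P − AᵀPA positive definite. Let M₁ ∈ ℝ^{n×n}, M₂ ∈ ℝ^{n×q}, M₃ ∈ ℝ^{q×n} be arbitrary, and for ε ∈ ℝ define N(ε) = [[A + ε M₁, ε M₂], [ε M₃, (1 − ε) I_q]] ∈ ℝ^{(n+q)×(n+q)} and 𝒫 = diag(P, I_q). Then there exists ε* ∈ (0, 1] such that for all ε ∈ (0, ε*), the matrix 𝒫 − N(ε)ᵀ 𝒫 N(ε) is positive definite. -/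
open Matrix

lemma posDef_congr {m : Type*} [Fintype m] [DecidableEq m]
    {R T T' : Matrix m m ℝ} (hR : R.PosDef) (hT : T' * T = 1) :
    (Tᵀ * R * T).PosDef := by
  refine Matrix.PosDef.of_dotProduct_mulVec_pos ?_ ?_
  · have h2 : Rᵀ = R := by
      have h1 : Rᴴ = R := hR.1
      simpa [Matrix.conjTranspose_eq_transpose_of_trivial] using h1
    show (Tᵀ * R * T)ᴴ = _
    simp [Matrix.conjTranspose_eq_transpose_of_trivial, transpose_mul, transpose_transpose,
      h2, Matrix.mul_assoc]
  · intro x hx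
    have hTx : T *ᵥ x ≠ 0 := by
      intro h
      apply hx
      have : T' *ᵥ (T *ᵥ x) = x := by rw [mulVec_mulVec, hT, one_mulVec]
      rw [h, mulVec_zero] at this; exact this.symm
    have := hR.dotProduct_mulVec_pos hTx
    simpa [← mulVec_mulVec, dotProduct_mulVec (star x), vecMul_transpose, star_mulVec,
      dotProduct_mulVec] using this

lemma posDef_lb {m : Type*} [Fintype m] [DecidableEq m] {M : Matrix m m ℝ} (hM : M.PosDef) :
    ∃ d > 0, ∀ x : m → ℝ, d * (∑ i, x i ^ 2) ≤ x ⬝ᵥ M *ᵥ x := by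
  cases isEmpty_or_nonempty m with
  | inl h =>
    refine ⟨1, one_pos, fun x => ?_⟩
    simp [dotProduct]
  | inr h =>
    set E := EuclideanSpace ℝ m
    set e : E ≃ (m → ℝ) := WithLp.equiv 2 (m → ℝ) with he
    have hcont : Continuous fun z : E => (e z) ⬝ᵥ M *ᵥ (e z) := by
      have h1 : Continuous fun v : m → ℝ => v ⬝ᵥ M *ᵥ v := by
        simp only [dotProduct, mulVec]
        exact continuous_finset_sum _ fun i _ =>
          (continuous_apply i).mul (continuous_finset_sum _ fun j _ =>
            continuous_const.mul (continuous_apply j))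
      exact h1.comp (PiLp.continuous_ofLp 2 (fun _ : m => ℝ))
    obtain ⟨i⟩ := h
    have hSne : (Metric.sphere (0:E) 1).Nonempty := by
      refine ⟨EuclideanSpace.single i 1, ?_⟩
      rw [mem_sphere_zero_iff_norm, EuclideanSpace.norm_single, norm_one]
    obtain ⟨x₀, hx₀S, hmin⟩ := (isCompact_sphere (0:E) 1).exists_isMinOn hSne hcont.continuousOn
    have hx₀norm : ‖x₀‖ = 1 := by simpa using mem_sphere_zero_iff_norm.mp hx₀S
    have hx₀ne : e x₀ ≠ 0 := by
      intro hz
      have : x₀ = 0 := by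
        apply e.injective; rw [hz, he, WithLp.equiv_apply, WithLp.ofLp_zero]
      simp [this] at hx₀norm
    set d := (e x₀) ⬝ᵥ M *ᵥ (e x₀) with hd
    have hdpos : 0 < d := by simpa using hM.dotProduct_mulVec_pos hx₀ne
    refine ⟨d, hdpos, fun x => ?_⟩
    by_cases hx : x = 0
    · simp [hx, dotProduct]
    · set X : E := e.symm x with hX
      have hXne : X ≠ 0 := by
        intro hz; apply hx
        have := congrArg e hz; rw [hX, e.apply_symm_apply] at this; rw [this, he, WithLp.equiv_apply, WithLp.ofLp_zero]
      set r : ℝ := ‖X‖ with hr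
      have hrpos : 0 < r := norm_pos_iff.mpr hXne
      have hmem : (r⁻¹ • X) ∈ Metric.sphere (0:E) 1 := by
        have : ‖r⁻¹ • X‖ = 1 := by
          rw [norm_smul, norm_inv, Real.norm_eq_abs, abs_of_pos hrpos, ← hr,
            inv_mul_cancel₀ hrpos.ne']
        simpa [mem_sphere_zero_iff_norm] using this
      have hle : d ≤ (e (r⁻¹ • X)) ⬝ᵥ M *ᵥ (e (r⁻¹ • X)) := hmin hmem
      have heX : e X = x := by simp [hX]
      have hsmul : e (r⁻¹ • X) = r⁻¹ • x := by
        rw [he, WithLp.equiv_apply, WithLp.ofLp_smul, ← WithLp.equiv_apply, ← he, heX]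
      rw [hsmul, smul_dotProduct, mulVec_smul, dotProduct_smul, smul_eq_mul, smul_eq_mul] at hle
      have hr2 : r ^ 2 = ∑ j, x j ^ 2 := by
        rw [hr, EuclideanSpace.norm_eq, Real.sq_sqrt (by positivity)]
        refine Finset.sum_congr rfl fun j _ => ?_
        rw [← heX, Real.norm_eq_abs, sq_abs]
        rfl
      have : d * r ^ 2 ≤ x ⬝ᵥ M *ᵥ x := by
        have := mul_le_mul_of_nonneg_right hle (le_of_lt (mul_pos hrpos hrpos))
        calc d * r ^ 2 = d * (r * r) := by ring
        _ ≤ r⁻¹ * (r⁻¹ * (x ⬝ᵥ M *ᵥ x)) * (r * r) := this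
        _ = x ⬝ᵥ M *ᵥ x := by field_simp
      rwa [hr2] at this

lemma quad_abs_le {m : Type*} [Fintype m] (B : Matrix m m ℝ) (x : m → ℝ) :
    |x ⬝ᵥ B *ᵥ x| ≤ (∑ i, ∑ j, |B i j|) * (∑ i, x i ^ 2) := by
  have hS : ∀ i j : m, |x i| * |x j| ≤ ∑ k, x k ^ 2 := by
    intro i j
    have h1 : x i ^ 2 ≤ ∑ k, x k ^ 2 :=
      Finset.single_le_sum (fun k _ => sq_nonneg (x k)) (Finset.mem_univ i)
    have h2 : x j ^ 2 ≤ ∑ k, x k ^ 2 :=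
      Finset.single_le_sum (fun k _ => sq_nonneg (x k)) (Finset.mem_univ j)
    nlinarith [sq_nonneg (|x i| - |x j|), abs_nonneg (x i), abs_nonneg (x j),
      sq_abs (x i), sq_abs (x j)]
  calc |x ⬝ᵥ B *ᵥ x| = |∑ i, ∑ j, x i * (B i j * x j)| := by
        simp [dotProduct, mulVec, Finset.mul_sum]
  _ ≤ ∑ i, |∑ j, x i * (B i j * x j)| := Finset.abs_sum_le_sum_abs _ _
  _ ≤ ∑ i, ∑ j, |x i * (B i j * x j)| :=
      Finset.sum_le_sum fun i _ => Finset.abs_sum_le_sum_abs _ _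
  _ ≤ ∑ i, ∑ j, |B i j| * (∑ k, x k ^ 2) := by
      refine Finset.sum_le_sum fun i _ => Finset.sum_le_sum fun j _ => ?_
      rw [abs_mul, abs_mul]
      calc |x i| * (|B i j| * |x j|) = |B i j| * (|x i| * |x j|) := by ring
      _ ≤ |B i j| * (∑ k, x k ^ 2) :=
          mul_le_mul_of_nonneg_left (hS i j) (abs_nonneg _)
  _ = (∑ i, ∑ j, |B i j|) * (∑ i, x i ^ 2) := by
      rw [Finset.sum_mul]
      exact Finset.sum_congr rfl fun i _ => (Finset.sum_mul _ _ _).symm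

lemma posDef_of_close {m : Type*} [Fintype m] [DecidableEq m] {M M' : Matrix m m ℝ}
    (hH : M'.IsHermitian) (d : ℝ)
    (hlb : ∀ x : m → ℝ, d * (∑ i, x i ^ 2) ≤ x ⬝ᵥ M *ᵥ x)
    (hsmall : (∑ i, ∑ j, |M' i j - M i j|) < d) : M'.PosDef := by
  refine Matrix.PosDef.of_dotProduct_mulVec_pos hH fun x hx => ?_
  have hxS : 0 < ∑ i, x i ^ 2 := by
    obtain ⟨i, hi⟩ := Function.ne_iff.mp hx
    exact Finset.sum_pos' (fun k _ => sq_nonneg (x k))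
      ⟨i, Finset.mem_univ i, by exact sq_pos_of_ne_zero hi⟩
  have key : x ⬝ᵥ M' *ᵥ x = x ⬝ᵥ M *ᵥ x + x ⬝ᵥ (M' - M) *ᵥ x := by
    rw [sub_mulVec, dotProduct_sub]; ring
  have h1 := hlb x
  have h2 := (abs_le.mp (quad_abs_le (M' - M) x)).1
  have h3 : (∑ i, ∑ j, |(M' - M) i j|) * (∑ i, x i ^ 2) ≤
      (∑ i, ∑ j, |M' i j - M i j|) * (∑ i, x i ^ 2) := by
    apply le_of_eq; congr 1
  simp only [star_trivial]
  rw [key]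
  nlinarith

lemma posDef_fromBlocks_diag {m q : Type*} [Fintype m] [DecidableEq m] [Fintype q] [DecidableEq q]
    {D₁ : Matrix m m ℝ} {D₂ : Matrix q q ℝ} (h₁ : D₁.PosDef) (h₂ : D₂.PosDef) :
    (fromBlocks D₁ 0 0 D₂).PosDef := by
  refine Matrix.PosDef.of_dotProduct_mulVec_pos ?_ ?_
  · show (fromBlocks D₁ 0 0 D₂)ᴴ = _
    rw [fromBlocks_conjTranspose]
    simp only [conjTranspose_zero, transpose_zero]
    rw [h₁.1.eq, h₂.1.eq]
  · intro x hx
    simp only [star_trivial]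
    rw [← Sum.elim_comp_inl_inr x, fromBlocks_mulVec, dotProduct_block]
    simp only [Sum.elim_comp_inl, Sum.elim_comp_inr, zero_mulVec, add_zero, zero_add]
    have hcase : x ∘ Sum.inl ≠ 0 ∨ x ∘ Sum.inr ≠ 0 := by
      by_contra h
      push_neg at h
      apply hx
      ext i
      cases i with
      | inl i => exact congrFun h.1 i
      | inr i => exact congrFun h.2 i
    rcases hcase with h | h
    · have := h₁.dotProduct_mulVec_pos h
      have h2 := h₂.posSemidef.dotProduct_mulVec_nonneg (x ∘ Sum.inr)
      simp only [star_trivial, RCLike.re_to_real] at this h2 ⊢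
      linarith
    · have := h₂.dotProduct_mulVec_pos h
      have h2 := h₁.posSemidef.dotProduct_mulVec_nonneg (x ∘ Sum.inl)
      simp only [star_trivial, RCLike.re_to_real] at this h2 ⊢
      linarith

section Aux

variable {n q : ℕ} 

private def Tmat (n q : ℕ) (δ : ℝ) : Matrix (Fin n ⊕ Fin q) (Fin n ⊕ Fin q) ℝ :=
  fromBlocks 1 0 0 (δ • 1)

private def Rmat (n q : ℕ) (A P : Matrix (Fin n) (Fin n) ℝ) (M₁ : Matrix (Fin n) (Fin n) ℝ)
    (M₂ : Matrix (Fin n) (Fin q) ℝ) (M₃ : Matrix (Fin q) (Fin n) ℝ) (δ : ℝ) :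
    Matrix (Fin n ⊕ Fin q) (Fin n ⊕ Fin q) ℝ :=
  fromBlocks
    (P - (A + δ ^ 2 • M₁)ᵀ * P * (A + δ ^ 2 • M₁) - (δ ^ 2 * δ ^ 2) • (M₃ᵀ * M₃))
    ((-δ) • ((A + δ ^ 2 • M₁)ᵀ * P * M₂) - (δ * (1 - δ ^ 2)) • M₃ᵀ)
    ((-δ) • (M₂ᵀ * P * (A + δ ^ 2 • M₁)) - (δ * (1 - δ ^ 2)) • M₃)
    ((2 - δ ^ 2) • (1 : Matrix (Fin q) (Fin q) ℝ) - δ ^ 2 • (M₂ᵀ * P * M₂))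

private lemma fromBlocks_sub' {l m o p : Type*} {α : Type*} [Sub α]
    (A : Matrix l m α) (B : Matrix l o α) (C : Matrix p m α) (D : Matrix p o α)
    (A' : Matrix l m α) (B' : Matrix l o α) (C' : Matrix p m α) (D' : Matrix p o α) :
    fromBlocks A B C D - fromBlocks A' B' C' D' =
      fromBlocks (A - A') (B - B') (C - C') (D - D') := by
  ext (i | i) (j | j) <;> rfl

private lemma Rzero (A P : Matrix (Fin n) (Fin n) ℝ) (M₁ : Matrix (Fin n) (Fin n) ℝ)
    (M₂ : Matrix (Fin n) (Fin q) ℝ) (M₃ : Matrix (Fin q) (Fin n) ℝ) :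
    Rmat n q A P M₁ M₂ M₃ 0 =
      fromBlocks (P - Aᵀ * P * A) 0 0 ((2 : ℝ) • (1 : Matrix (Fin q) (Fin q) ℝ)) := by
  simp [Rmat]

private lemma Rcont (A P : Matrix (Fin n) (Fin n) ℝ) (M₁ : Matrix (Fin n) (Fin n) ℝ)
    (M₂ : Matrix (Fin n) (Fin q) ℝ) (M₃ : Matrix (Fin q) (Fin n) ℝ) :
    Continuous (Rmat n q A P M₁ M₂ M₃) := by
  unfold Rmat
  have hX : Continuous fun δ : ℝ => A + δ ^ 2 • M₁ :=
    continuous_const.add ((continuous_pow 2).smul continuous_const)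
  apply Continuous.matrix_fromBlocks
  · exact (continuous_const.sub ((hX.matrix_transpose.matrix_mul continuous_const).matrix_mul
      hX)).sub (((continuous_pow 2).mul (continuous_pow 2)).smul continuous_const)
  · exact ((continuous_id.neg).smul ((hX.matrix_transpose.matrix_mul
      continuous_const).matrix_mul continuous_const)).sub
      ((continuous_id.mul (continuous_const.sub (continuous_pow 2))).smul continuous_const)
  · exact ((continuous_id.neg).smul ((continuous_const.matrix_mul continuous_const).matrix_mul
      hX)).sub
      ((continuous_id.mul (continuous_const.sub (continuous_pow 2))).smul continuous_const)
  · exact ((continuous_const.sub (continuous_pow 2)).smul continuous_const).sub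
      ((continuous_pow 2).smul continuous_const)

private lemma Rherm (A P : Matrix (Fin n) (Fin n) ℝ) (hPt : Pᵀ = P)
    (M₁ : Matrix (Fin n) (Fin n) ℝ)
    (M₂ : Matrix (Fin n) (Fin q) ℝ) (M₃ : Matrix (Fin q) (Fin n) ℝ) (δ : ℝ) :
    (Rmat n q A P M₁ M₂ M₃ δ).IsHermitian := by
  show _ᴴ = _
  rw [Matrix.conjTranspose_eq_transpose_of_trivial]
  unfold Rmat
  rw [fromBlocks_transpose, fromBlocks_inj]
  refine ⟨?_, ?_, ?_, ?_⟩ <;>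
    simp only [transpose_sub, transpose_smul, transpose_mul, transpose_add, transpose_one,
      transpose_neg, transpose_transpose, hPt, Matrix.mul_assoc, transpose_zero, neg_smul]

end Aux

section Key
variable {n q : ℕ}

private lemma Tinv (δ : ℝ) (hδ : δ ≠ 0) :
    Tmat n q δ⁻¹ * Tmat n q δ = 1 := by
  unfold Tmat
  rw [fromBlocks_multiply]
  simp [Matrix.smul_mul, Matrix.mul_smul, smul_smul, inv_mul_cancel₀ hδ, mul_inv_cancel₀ hδ,
    Matrix.fromBlocks_one]

private lemma keyId (A P : Matrix (Fin n) (Fin n) ℝ) (hPt : Pᵀ = P)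
    (M₁ : Matrix (Fin n) (Fin n) ℝ)
    (M₂ : Matrix (Fin n) (Fin q) ℝ) (M₃ : Matrix (Fin q) (Fin n) ℝ) (δ : ℝ) :
    ((Matrix.fromBlocks P 0 0 (1 : Matrix (Fin q) (Fin q) ℝ)) -
        (Matrix.fromBlocks (A + δ ^ 2 • M₁) (δ ^ 2 • M₂) (δ ^ 2 • M₃)
          ((1 - δ ^ 2) • (1 : Matrix (Fin q) (Fin q) ℝ)))ᵀ *
        (Matrix.fromBlocks P 0 0 (1 : Matrix (Fin q) (Fin q) ℝ)) *
        (Matrix.fromBlocks (A + δ ^ 2 • M₁) (δ ^ 2 • M₂) (δ ^ 2 • M₃)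
          ((1 - δ ^ 2) • (1 : Matrix (Fin q) (Fin q) ℝ)))) =
      (Tmat n q δ)ᵀ * (Rmat n q A P M₁ M₂ M₃ δ) * Tmat n q δ := by
  unfold Tmat Rmat
  rw [fromBlocks_transpose, fromBlocks_transpose, fromBlocks_multiply, fromBlocks_multiply,
    fromBlocks_multiply, fromBlocks_multiply, fromBlocks_sub', fromBlocks_inj]
  refine ⟨?_, ?_, ?_, ?_⟩ <;>
    simp only [transpose_sub, transpose_smul, transpose_mul, transpose_add, transpose_one,
      transpose_zero, transpose_transpose, hPt, Matrix.smul_mul, Matrix.mul_smul,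
      Matrix.one_mul, Matrix.mul_one, Matrix.zero_mul, Matrix.mul_zero, add_zero, zero_add,
      smul_smul, neg_smul, smul_zero, Matrix.mul_assoc, smul_add, sub_zero, zero_sub,
      Matrix.add_mul, Matrix.mul_add] <;>
    module

end Key

private lemma two_smul_one_posDef (q : ℕ) : ((2:ℝ) • (1 : Matrix (Fin q) (Fin q) ℝ)).PosDef := by
  refine Matrix.PosDef.of_dotProduct_mulVec_pos ?_ ?_
  · show _ᴴ = _
    rw [Matrix.conjTranspose_eq_transpose_of_trivial]
    simp
  · intro x hx
    simp only [star_trivial, Matrix.smul_mulVec, Matrix.one_mulVec, dotProduct_smul,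
      smul_eq_mul]
    have : (0:ℝ) < x ⬝ᵥ x := by
      obtain ⟨i, hi⟩ := Function.ne_iff.mp hx
      have : x ⬝ᵥ x = ∑ i, x i ^ 2 := by simp [dotProduct, sq]
      rw [this]
      exact Finset.sum_pos' (fun k _ => sq_nonneg (x k))
        ⟨i, Finset.mem_univ i, by exact sq_pos_of_ne_zero hi⟩
    linarith

set_option maxHeartbeats 1000000 in
/-- Lyapunov perturbation step: if `P ≻ 0` satisfies `P − AᵀPA ≻ 0`, then for
`N(ε) = [[A + εM₁, εM₂], [εM₃, (1−ε)I_q]]` and `𝒫 = diag(P, I_q)` there is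
`ε* ∈ (0, 1]` such that `𝒫 − N(ε)ᵀ𝒫N(ε) ≻ 0` for all `ε ∈ (0, ε*)`. -/
theorem lyapunov_perturbation
    (n q : ℕ)
    (A : Matrix (Fin n) (Fin n) ℝ)
    (P : Matrix (Fin n) (Fin n) ℝ) (hP : P.PosDef)
    (hLyap : (P - Aᵀ * P * A).PosDef)
    (M₁ : Matrix (Fin n) (Fin n) ℝ) (M₂ : Matrix (Fin n) (Fin q) ℝ)
    (M₃ : Matrix (Fin q) (Fin n) ℝ) :
    ∃ εstar ∈ Set.Ioc (0 : ℝ) 1, ∀ ε ∈ Set.Ioo (0 : ℝ) εstar,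
      ((Matrix.fromBlocks P 0 0 (1 : Matrix (Fin q) (Fin q) ℝ)) -
        (Matrix.fromBlocks (A + ε • M₁) (ε • M₂) (ε • M₃)
          ((1 - ε) • (1 : Matrix (Fin q) (Fin q) ℝ)))ᵀ *
        (Matrix.fromBlocks P 0 0 (1 : Matrix (Fin q) (Fin q) ℝ)) *
        (Matrix.fromBlocks (A + ε • M₁) (ε • M₂) (ε • M₃)
          ((1 - ε) • (1 : Matrix (Fin q) (Fin q) ℝ)))).PosDef := by
  have hPt : Pᵀ = P := by
    rw [← Matrix.conjTranspose_eq_transpose_of_trivial]; exact hP.1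
  -- positive definiteness of R 0
  have h2I : ((2:ℝ) • (1 : Matrix (Fin q) (Fin q) ℝ)).PosDef := two_smul_one_posDef q
  have hR0 : (Rmat n q A P M₁ M₂ M₃ 0).PosDef := by
    rw [Rzero]
    exact posDef_fromBlocks_diag hLyap h2I
  obtain ⟨d, hd, hlb⟩ := posDef_lb hR0
  -- continuity of the error term
  have hg : Continuous fun δ : ℝ =>
      ∑ i, ∑ j, |Rmat n q A P M₁ M₂ M₃ δ i j - Rmat n q A P M₁ M₂ M₃ 0 i j| := by
    refine continuous_finset_sum _ fun i _ => continuous_finset_sum _ fun j _ => ?_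
    exact (((Rcont A P M₁ M₂ M₃).matrix_elem i j).sub continuous_const).abs
  have hg0 : (fun δ : ℝ =>
      ∑ i, ∑ j, |Rmat n q A P M₁ M₂ M₃ δ i j - Rmat n q A P M₁ M₂ M₃ 0 i j|) 0 = 0 := by
    simp
  obtain ⟨a, ha, hball⟩ := Metric.continuousAt_iff.mp (hg.continuousAt (x := 0)) d hd
  set δstar : ℝ := min a 1 with hδstar
  have hδstarpos : 0 < δstar := lt_min ha one_pos
  refine ⟨δstar ^ 2, ⟨by positivity, ?_⟩, ?_⟩
  · have h1 : δstar ≤ 1 := min_le_right a 1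
    nlinarith
  · intro ε hε
    set δ : ℝ := Real.sqrt ε with hδdef
    have hδpos : 0 < δ := Real.sqrt_pos.mpr hε.1
    have hδ2 : δ ^ 2 = ε := Real.sq_sqrt hε.1.le
    have hδlt : δ < δstar := by
      have : δ < Real.sqrt (δstar ^ 2) := Real.sqrt_lt_sqrt hε.1.le hε.2
      rwa [Real.sqrt_sq hδstarpos.le] at this
    -- R δ is positive definite
    have hsmall : (∑ i, ∑ j, |Rmat n q A P M₁ M₂ M₃ δ i j - Rmat n q A P M₁ M₂ M₃ 0 i j|) < d := by
      have hdist : dist δ (0:ℝ) < a := by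
        rw [Real.dist_eq, sub_zero, abs_of_pos hδpos]
        exact lt_of_lt_of_le hδlt (min_le_left a 1)
      have h := hball hdist
      have h0 : (∑ i, ∑ j, |Rmat n q A P M₁ M₂ M₃ 0 i j - Rmat n q A P M₁ M₂ M₃ 0 i j|) = 0 := by
        simp
      rw [Real.dist_eq, h0, sub_zero] at h
      have hnn : (0:ℝ) ≤ ∑ i, ∑ j, |Rmat n q A P M₁ M₂ M₃ δ i j - Rmat n q A P M₁ M₂ M₃ 0 i j| := by
        positivity
      rwa [abs_of_nonneg hnn] at h
    have hRδ : (Rmat n q A P M₁ M₂ M₃ δ).PosDef := by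
      refine posDef_of_close (Rherm A P hPt M₁ M₂ M₃ δ) d hlb ?_
      exact hsmall
    rw [← hδ2]
    rw [keyId A P hPt M₁ M₂ M₃ δ]
    exact posDef_congr hRδ (Tinv δ hδpos.ne')
end
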